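/- (Generator reduction.) Let (X, χ) be a T-algebra and g : G → X a set of generators for it. If r ∈ G is redundant with respect to g, then the restriction g ∘ ι_r : G∖{r} → X is again a set of generators for (X, χ), i.e., (g ∘ ι_r)^♯ : T(G∖{r}) → X has a right inverse as a function. -/

import Mathlib

open CategoryTheory

universe u

/-- `g : G → X` is a set of generators for the `T`-algebra `(X, χ)`:
its free `T`-extension `g^♯ = χ ∘ T g` is a split epimorphism of sets. -/
def IsGeneratorSet (T : Monad (Type u)) {G X : Type u}
    (χ : T.toFunctor.obj X → X) (g : G → X) : Prop :=
  ∃ s : X → T.toFunctor.obj G, (χ ∘ T.toFunctor.map (TypeCat.ofHom g)) ∘ s = id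

/-- `r : G` is redundant with respect to `g : G → X`: there is `U ∈ T(G∖{r})` with
`(g ∘ ι_r)^♯(U) = g r`. -/
def Redundant (T : Monad (Type u)) {G X : Type u}
    (χ : T.toFunctor.obj X → X) (g : G → X) (r : G) : Prop :=
  ∃ U : T.toFunctor.obj {x : G // x ≠ r},
    χ (T.toFunctor.map (TypeCat.ofHom (fun u : {x : G // x ≠ r} => g u.val)) U) = g r

/-- Generator reduction: if `g : G → X` is a set of generators for the
`T`-algebra `(X, χ)` and `r ∈ G` is redundant with respect to `g`, then the restriction
`g ∘ ι_r : G∖{r} → X` is again a set of generators for `(X, χ)`. -/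
theorem generator_reduction
    (T : Monad (Type u)) (X : Type u) (χ : T.toFunctor.obj X → X)
    (hunit : χ ∘ T.η.app X = id)
    (hassoc : χ ∘ T.μ.app X = χ ∘ T.toFunctor.map (TypeCat.ofHom χ))
    (G : Type u) (g : G → X) (hgen : IsGeneratorSet T χ g)
    (r : G) (hr : Redundant T χ g r) :
    IsGeneratorSet T χ (fun u : {x : G // x ≠ r} => g u.val) := by
  classical
  obtain ⟨s, hs⟩ := hgen
  obtain ⟨U, hU⟩ := hr
  set gι : {x : G // x ≠ r} → X := fun u => g u.val with hgι
  set f : G → T.toFunctor.obj {x : G // x ≠ r} :=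
    fun x => if h : x = r then U else T.η.app _ ⟨x, h⟩ with hf
  have key : (χ ∘ T.toFunctor.map (TypeCat.ofHom gι)) ∘ f = g := by
    funext y
    by_cases h : y = r
    · subst h; simpa [f] using hU
    · simp only [Function.comp_apply, hf, dif_neg h]
      have nat := NatTrans.naturality_apply T.η (TypeCat.ofHom gι) (⟨y, h⟩ : {x : G // x ≠ r})
      simp only [Functor.id_obj, Functor.id_map, TypeCat.ofHom_apply] at nat
      rw [← nat]
      exact congrFun hunit (gι ⟨y, h⟩)
  refine ⟨T.μ.app _ ∘ T.toFunctor.map (TypeCat.ofHom f) ∘ s, ?_⟩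
  funext x
  have nat2 := NatTrans.naturality_apply T.μ (TypeCat.ofHom gι) (T.toFunctor.map (TypeCat.ofHom f) (s x))
  simp only [Functor.comp_obj, Functor.comp_map] at nat2
  have step1 : χ (T.toFunctor.map (TypeCat.ofHom gι) (T.μ.app _ (T.toFunctor.map (TypeCat.ofHom f) (s x))))
      = χ (T.μ.app X (T.toFunctor.map (T.toFunctor.map (TypeCat.ofHom gι)) (T.toFunctor.map (TypeCat.ofHom f) (s x)))) := by
    rw [nat2]
  have step2 := congrFun hassoc (T.toFunctor.map (T.toFunctor.map (TypeCat.ofHom gι)) (T.toFunctor.map (TypeCat.ofHom f) (s x)))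
  simp only [Function.comp_apply] at step1 step2 ⊢
  rw [step1, step2,
    ← Functor.map_comp_apply, ← Functor.map_comp_apply]
  have : (TypeCat.ofHom f ≫ T.toFunctor.map (TypeCat.ofHom gι) ≫ TypeCat.ofHom χ) = TypeCat.ofHom g := by
    ext y; exact congrFun key y
  rw [this]
  exact congrFun hs x
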